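/- Let K be a simplicial complex whose vertex set is partitioned into V_0,…,V_m such that each induced subcomplex K_{{i}} is 0-dimensional (no two vertices of the same colour span an edge), and let F be a field. If H̃_{|S|-2}(K_S, F) = 0 for every nonempty S ⊆ {0,…,m}, then every simplex of K is contained in a rainbow simplex. -/

import Mathlib

open Finset

/-- The faces of an abstract simplicial complex: a set of nonempty finite sets of
vertices, closed under taking nonempty subsets. -/
def IsComplex {V : Type*} (S : Set (Finset V)) : Prop :=
  (∀ s ∈ S, s.Nonempty) ∧ ∀ s ∈ S, ∀ t ⊆ s, t.Nonempty → t ∈ S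

/-- The nerve of a collection `Γ` of (sub)complexes, as a set of finsets of the index
type: the simplices are the nonempty subcollections with a common face. -/
def nerveC {ι V : Type*} (Γ : ι → Set (Finset V)) : Set (Finset ι) :=
  {σ | σ.Nonempty ∧ (⋂ i ∈ (σ : Finset ι), Γ i).Nonempty}

/-- Simplicial `n`-chains (dimension `n`, i.e. on vertex sets of cardinality `n+1`)
on the vertex type `V`, with coefficients in `A`. -/
abbrev Chains (A V : Type*) [AddCommGroup A] [LinearOrder V] (n : ℕ) : Type _ :=
  {s : Finset V // s.card = n + 1} →₀ A

variable (R : Type*) [CommRing R] (A : Type*) [AddCommGroup A] [Module R A]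
variable (V : Type*) [LinearOrder V]

/-- The simplicial boundary map, with the usual alternating signs determined by the
linear order on the vertices. -/
noncomputable def bdry (n : ℕ) : Chains A V (n + 1) →ₗ[R] Chains A V n :=
  Finsupp.lsum R fun s =>
    ∑ v ∈ (s : Finset V).attach,
      ((-1 : ℤ) ^ (((s : Finset V).filter (fun w => w < v.1)).card)) •
        (Finsupp.lsingle (R := R) ⟨(s : Finset V).erase v.1, by
          rw [Finset.card_erase_of_mem v.2, s.2]; rfl⟩)

/-- The augmentation map on `0`-chains. -/
noncomputable def aug : Chains A V 0 →ₗ[R] A :=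
  Finsupp.lsum R fun _ => LinearMap.id

/-- Reduced cycles: kernel of the boundary map, resp. of the augmentation in degree 0. -/
noncomputable def cycles : (n : ℕ) → Submodule R (Chains A V n)
  | 0 => LinearMap.ker (aug R A V)
  | (n + 1) => LinearMap.ker (bdry R A V n)

/-- Chains supported on the simplices belonging to `S`. -/
def chainsIn (S : Set (Finset V)) (n : ℕ) : Submodule R (Chains A V n) :=
  Finsupp.supported A R {s : {s : Finset V // s.card = n + 1} | ↑s ∈ S}

/-- Reduced cycles of the complex `S`. -/
noncomputable def cyclesIn (S : Set (Finset V)) (n : ℕ) : Submodule R (Chains A V n) :=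
  cycles R A V n ⊓ chainsIn R A V S n

/-- Boundaries of chains of the complex `S`. -/
noncomputable def boundariesIn (S : Set (Finset V)) (n : ℕ) : Submodule R (Chains A V n) :=
  Submodule.map (bdry R A V n) (chainsIn R A V S (n + 1))

/-- Reduced simplicial homology of the complex `S` in degree `n ≥ 0`,
with coefficients in the `R`-module `A`. -/
noncomputable abbrev redH (S : Set (Finset V)) (n : ℕ) : Type _ :=
  (cyclesIn R A V S n) ⧸
    (Submodule.comap (cyclesIn R A V S n).subtype (boundariesIn R A V S n))

/-- Vanishing of the reduced homology of `S` in degree `n : ℤ`, with the convention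
that `H̃₋₁(S) = 0` iff `S` is nonempty (and trivial vanishing below degree `-1`). -/
def RedHVanish (S : Set (Finset V)) (n : ℤ) : Prop :=
  if n < -1 then True
  else if n = -1 then S.Nonempty
  else Subsingleton (redH R A V S n.toNat)

open scoped Classical in
/-- The dimension (rank) of the reduced homology of `S` in degree `n : ℤ`; in degree `-1`
it is `0` iff `S` is nonempty, in accordance with the convention. -/
noncomputable def redHRank (S : Set (Finset V)) (n : ℤ) : Cardinal :=
  if n < -1 then 0
  else if n = -1 then (if S.Nonempty then (0 : Cardinal) else 1)
  else Module.rank R (redH R A V S n.toNat)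



section Cochain
variable {V : Type*} [LinearOrder V] {F : Type*} [Field F]

/-- Sign of a vertex in a simplex. -/
def eps (F : Type*) [Field F] (r : Finset V) (v : V) : F :=
  (-1 : F) ^ ((r.filter (fun w => w < v)).card)

/-- Coboundary of a cochain (a function on finsets). -/
def cobd (f : Finset V → F) (r : Finset V) : F :=
  ∑ v ∈ r, eps F r v * f (r.erase v)

lemma cobd_sub (f g : Finset V → F) (r : Finset V) :
    cobd (fun e => f e - g e) r = cobd f r - cobd g r := by
  unfold cobd
  rw [← Finset.sum_sub_distrib]
  exact Finset.sum_congr rfl (fun v _ => by ring)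

lemma eps_swap {r : Finset V} {v w : V} (hv : v ∈ r) (hw : w ∈ r) (hvw : w < v) :
    eps F r v * eps F (r.erase v) w = -(eps F r w * eps F (r.erase w) v) := by
  unfold eps
  have h1 : (r.erase v).filter (fun x => x < w) = (r.filter (fun x => x < w)).erase v := by
    rw [Finset.filter_erase]
  have h2 : (r.erase w).filter (fun x => x < v) = (r.filter (fun x => x < v)).erase w := by
    rw [Finset.filter_erase]
  have hv1 : v ∉ r.filter (fun x => x < w) := by
    simp only [Finset.mem_filter, not_and]
    exact fun _ h => absurd h (not_lt.2 hvw.le)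
  have hw1 : w ∈ r.filter (fun x => x < v) := Finset.mem_filter.2 ⟨hw, hvw⟩
  have hA : 1 ≤ (r.filter (fun x => x < v)).card := Finset.card_pos.2 ⟨w, hw1⟩
  rw [h1, h2, Finset.erase_eq_of_notMem hv1, Finset.card_erase_of_mem hw1]
  rw [← pow_add, ← pow_add, ← neg_one_mul ((-1:F) ^ _), ← pow_succ']
  congr 1
  omega

lemma cobd_cobd (f : Finset V → F) (r : Finset V) : cobd (cobd f) r = 0 := by
  unfold cobd
  have : ∀ v ∈ r, eps F r v * ∑ w ∈ r.erase v, eps F (r.erase v) w * f ((r.erase v).erase w)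
      = ∑ w ∈ r.erase v, eps F r v * (eps F (r.erase v) w * f ((r.erase v).erase w)) := by
    intro v _; rw [Finset.mul_sum]
  rw [Finset.sum_congr rfl this, Finset.sum_sigma']
  refine Finset.sum_involution (fun p hp => ⟨p.2, p.1⟩) ?_ ?_ ?_ ?_
  · rintro ⟨v, w⟩ hp
    have hp' := hp
    simp only [Finset.mem_sigma, Finset.mem_erase] at hp'
    obtain ⟨hv, hwv, hw⟩ := hp'
    dsimp only
    have herase : (r.erase v).erase w = (r.erase w).erase v := Finset.erase_right_comm
    rcases lt_or_gt_of_ne hwv with h | h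
    · rw [herase]
      linear_combination (eps_swap (F := F) hv hw h) * f ((r.erase w).erase v)
    · rw [← herase]
      linear_combination (eps_swap (F := F) hw hv h) * f ((r.erase v).erase w)
  · rintro ⟨v, w⟩ hp _
    have hp' := hp
    simp only [Finset.mem_sigma, Finset.mem_erase] at hp'
    intro hEq
    dsimp only at hEq
    have : w = v := congrArg Sigma.fst hEq
    exact hp'.2.1 this
  · rintro ⟨v, w⟩ hp
    simp only [Finset.mem_sigma, Finset.mem_erase] at hp ⊢
    exact ⟨hp.2.2, fun hEq => hp.2.1 hEq.symm, hp.1⟩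
  · rintro ⟨v, w⟩ hp; rfl

end Cochain
section Pairing
variable {V : Type*} [LinearOrder V] {F : Type*} [Field F]

/-- Pairing a cochain with a chain, as a linear functional. -/
noncomputable def Pairf (f : Finset V → F) (n : ℕ) : Chains F V n →ₗ[F] F :=
  Finsupp.lsum F fun s => LinearMap.smulRight (LinearMap.id : F →ₗ[F] F) (f ↑s)

@[simp] lemma Pairf_single (f : Finset V → F) (n : ℕ)
    (t : {s : Finset V // s.card = n + 1}) (a : F) :
    Pairf f n (Finsupp.single t a) = a * f ↑t := by
  simp [Pairf]

lemma Pairf_bdry (f : Finset V → F) (n : ℕ) (x : Chains F V (n + 1)) :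
    Pairf f n (bdry F F V n x) = Pairf (cobd f) (n + 1) x := by
  have : (Pairf f n).comp (bdry F F V n) = Pairf (cobd f) (n + 1) := by
    apply Finsupp.lhom_ext
    intro t a
    simp only [LinearMap.comp_apply, Pairf_single]
    rw [bdry, Finsupp.lsum_single]
    simp only [LinearMap.sum_apply, LinearMap.smul_apply, Finsupp.lsingle_apply, map_sum,
      map_zsmul, Pairf_single]
    have : ∀ v ∈ (t : Finset V).attach,
        ((-1 : ℤ) ^ (((t : Finset V).filter (fun w => w < v.1)).card)) •
          (a * f ((t : Finset V).erase v.1))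
        = a * (eps F (t : Finset V) v.1 * f ((t : Finset V).erase v.1)) := by
      intro v _
      rw [zsmul_eq_mul, eps]
      push_cast
      ring
    rw [Finset.sum_congr rfl this, ← Finset.mul_sum, cobd]
    congr 1
    exact Finset.sum_attach (t : Finset V) (fun v => eps F (t : Finset V) v * f ((t : Finset V).erase v))
  exact LinearMap.congr_fun this x

lemma Pairf_indicator {n : ℕ} (s : Finset V) (hs : s.card = n + 1) (x : Chains F V n) :
    Pairf (fun e => if e = s then (1 : F) else 0) n x = x ⟨s, hs⟩ := by
  have : Pairf (fun e => if e = s then (1 : F) else 0) n = Finsupp.lapply ⟨s, hs⟩ := by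
    apply Finsupp.lhom_ext
    intro t a
    simp only [Pairf_single, Finsupp.lapply_apply, Finsupp.single_apply]
    by_cases h : t = ⟨s, hs⟩
    · subst h; simp
    · have : (t : Finset V) ≠ s := fun hh => h (Subtype.ext hh)
      simp [h, this]
  rw [this, Finsupp.lapply_apply]

@[simp] lemma aug_single (t : {s : Finset V // s.card = 0 + 1}) (a : F) :
    aug F F V (Finsupp.single t a) = a := by
  simp [aug]

lemma bdry_eval_ne_zero {n : ℕ} (x : Chains F V (n + 1))
    (cell : {s : Finset V // s.card = n + 1})
    (hne : bdry F F V n x cell ≠ 0) :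
    ∃ r ∈ x.support, ∃ v ∈ ((r : {s : Finset V // s.card = n + 1 + 1}) : Finset V),
      ((r : {s : Finset V // s.card = n + 1 + 1}) : Finset V).erase v = (cell : Finset V) := by
  by_contra hcon
  push_neg at hcon
  apply hne
  rw [bdry, Finsupp.lsum_apply, Finsupp.sum_apply, Finsupp.sum]
  refine Finset.sum_eq_zero ?_
  intro r hr
  simp only [LinearMap.sum_apply, LinearMap.smul_apply, Finsupp.lsingle_apply]
  rw [Finsupp.finset_sum_apply]
  refine Finset.sum_eq_zero ?_
  intro v _
  have hv := hcon r hr v.1 v.2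
  have : (⟨(r : Finset V).erase v.1, by
      rw [Finset.card_erase_of_mem v.2, r.2]; rfl⟩ : {s : Finset V // s.card = n + 1}) ≠ cell := by
    intro hh
    exact hv (congrArg Subtype.val hh)
  rw [Finsupp.smul_apply, Finsupp.single_apply, if_neg this, smul_zero]

end Pairing
section Coh
variable {V : Type*} [LinearOrder V] {F : Type*} [Field F]

lemma exists_factor {M N : Type*} [AddCommGroup M] [Module F M]
    [AddCommGroup N] [Module F N]
    (B : M →ₗ[F] N) (L : M →ₗ[F] F) (h : LinearMap.ker B ≤ LinearMap.ker L) :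
    ∃ Ψ : N →ₗ[F] F, ∀ x, Ψ (B x) = L x := by
  obtain ⟨q, hq⟩ := Submodule.exists_isCompl (LinearMap.range B)
  let π := Submodule.linearProjOfIsCompl _ q hq
  let e := LinearMap.quotKerEquivRange B
  let L' := (LinearMap.ker B).liftQ L h
  refine ⟨L'.comp ((e.symm : LinearMap.range B →ₗ[F] _).comp π), fun x => ?_⟩
  have h1 : π (B x) = ⟨B x, LinearMap.mem_range_self B x⟩ :=
    Submodule.linearProjOfIsCompl_apply_left hq ⟨B x, LinearMap.mem_range_self B x⟩
  have h2 : e.symm ⟨B x, LinearMap.mem_range_self B x⟩ =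
      Submodule.Quotient.mk x := by
    apply e.injective
    rw [LinearEquiv.apply_symm_apply]
    exact Subtype.ext (LinearMap.quotKerEquivRange_apply_mk B x).symm
  simp only [LinearMap.comp_apply, LinearEquiv.coe_coe, h1, h2]
  exact Submodule.liftQ_apply _ L x

lemma apply_bdry_single {d : ℕ} (Ψ : Chains F V d →ₗ[F] F)
    (t : {s : Finset V // s.card = d + 1 + 1}) (a : F) :
    Ψ (bdry F F V d (Finsupp.single t a)) =
      ∑ v ∈ (t : Finset V).attach, eps F (t : Finset V) v.1 *
        Ψ (Finsupp.single ⟨(t : Finset V).erase v.1, by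
            rw [Finset.card_erase_of_mem v.2, t.2]; rfl⟩ a) := by
  rw [bdry, Finsupp.lsum_single]
  simp only [LinearMap.sum_apply, LinearMap.smul_apply, Finsupp.lsingle_apply, map_sum, map_zsmul]
  refine Finset.sum_congr rfl ?_
  intro v _
  rw [zsmul_eq_mul, eps]
  push_cast
  ring

lemma single_mem_chainsIn {K' : Set (Finset V)} {n : ℕ}
    (t : {s : Finset V // s.card = n + 1}) (ht : (t : Finset V) ∈ K') (a : F) :
    Finsupp.single t a ∈ chainsIn F F V K' n := by
  rw [chainsIn, Finsupp.mem_supported']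
  intro u hu
  rw [Finsupp.single_apply]
  rw [if_neg]
  intro hh
  exact hu (by rw [← hh]; exact ht)

lemma cohAux (K' : Set (Finset V)) (d : ℕ) (f : Finset V → F)
    (hf : ∀ z ∈ cyclesIn F F V K' d, Pairf f d z = 0) :
    ∃ g : Finset V → F, ∀ e : Finset V, e ∈ K' → e.card = d + 1 → cobd g e = f e := by
  set W := chainsIn F F V K' d with hW
  cases d with
  | zero =>
    let B : W →ₗ[F] F := (aug F F V).comp W.subtype
    let L : W →ₗ[F] F := (Pairf f 0).comp W.subtype
    have hker : LinearMap.ker B ≤ LinearMap.ker L := by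
      intro x hx
      rw [LinearMap.mem_ker] at hx ⊢
      refine hf _ ⟨hx, x.2⟩
    obtain ⟨Ψ, hΨ⟩ := exists_factor B L hker
    refine ⟨fun e => if e = ∅ then Ψ 1 else 0, fun e he hcard => ?_⟩
    obtain ⟨v, rfl⟩ := Finset.card_eq_one.1 hcard
    have hx : (Finsupp.single (⟨{v}, hcard⟩ : {s : Finset V // s.card = 0 + 1}) (1 : F)) ∈ W :=
      single_mem_chainsIn _ he _
    have := hΨ ⟨_, hx⟩
    simp only [B, L, LinearMap.comp_apply, Submodule.subtype_apply] at this
    rw [aug_single, Pairf_single, one_mul] at this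
    rw [cobd, Finset.sum_singleton, Finset.erase_singleton, if_pos rfl]
    rw [eps]
    have hfil : ({v} : Finset V).filter (fun w => w < v) = ∅ := by
      apply Finset.filter_eq_empty_iff.2
      intro w hw
      rw [Finset.mem_singleton] at hw
      subst hw
      exact lt_irrefl w
    rw [hfil, Finset.card_empty, pow_zero, one_mul, this]
  | succ d' =>
    let B : W →ₗ[F] Chains F V d' := (bdry F F V d').comp W.subtype
    let L : W →ₗ[F] F := (Pairf f (d' + 1)).comp W.subtype
    have hker : LinearMap.ker B ≤ LinearMap.ker L := by
      intro x hx
      rw [LinearMap.mem_ker] at hx ⊢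
      refine hf _ ⟨hx, x.2⟩
    obtain ⟨Ψ, hΨ⟩ := exists_factor B L hker
    refine ⟨fun e => if h : e.card = d' + 1 then Ψ (Finsupp.single ⟨e, h⟩ 1) else 0,
      fun e he hcard => ?_⟩
    have hx : (Finsupp.single (⟨e, hcard⟩ : {s : Finset V // s.card = d' + 1 + 1}) (1 : F)) ∈ W :=
      single_mem_chainsIn _ he _
    have hmain := hΨ ⟨_, hx⟩
    simp only [B, L, LinearMap.comp_apply, Submodule.subtype_apply] at hmain
    rw [apply_bdry_single, Pairf_single, one_mul] at hmain
    rw [cobd, ← Finset.sum_attach e (fun v => eps F e v * _)]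
    rw [← hmain]
    refine Finset.sum_congr rfl ?_
    intro v _
    congr 1
    have hc : (e.erase v.1).card = d' + 1 := by
      rw [Finset.card_erase_of_mem v.2, hcard]; rfl
    rw [dif_pos hc]
  end Coh
section MainDev
variable {V : Type*} [LinearOrder V] {F : Type*} [Field F] {m : ℕ}

/-- The induced subcomplex on colour classes in `U`. -/
def KC (K : Set (Finset V)) (c : V → Fin (m + 1)) (U : Finset (Fin (m + 1))) :
    Set (Finset V) := {s ∈ K | ∀ w ∈ s, c w ∈ U}

lemma Pairf_apply (f : Finset V → F) (n : ℕ) (x : Chains F V n) :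
    Pairf f n x = x.sum fun t a => a * f ↑t := by
  rw [Pairf, Finsupp.lsum_apply]
  rfl

lemma cobd_add (f g : Finset V → F) (r : Finset V) :
    cobd (fun e => f e + g e) r = cobd f r + cobd g r := by
  unfold cobd
  rw [← Finset.sum_add_distrib]
  exact Finset.sum_congr rfl (fun v _ => by ring)

lemma cobd_singleton (f : Finset V → F) (v : V) : cobd f {v} = f ∅ := by
  rw [cobd, Finset.sum_singleton, Finset.erase_singleton, eps]
  have hfil : ({v} : Finset V).filter (fun w => w < v) = ∅ := by
    apply Finset.filter_eq_empty_iff.2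
    intro w hw
    rw [Finset.mem_singleton] at hw
    subst hw
    exact lt_irrefl w
  rw [hfil, Finset.card_empty, pow_zero, one_mul]

lemma coh {K : Set (Finset V)} {c : V → Fin (m + 1)}
    (hcyc : ∀ U : Finset (Fin (m + 1)), 2 ≤ U.card →
      cyclesIn F F V (KC K c U) (U.card - 2) ≤ boundariesIn F F V (KC K c U) (U.card - 2))
    (U : Finset (Fin (m + 1))) (hU : 2 ≤ U.card) (θ : Finset V → F)
    (hθ : ∀ r ∈ K, r.card = U.card → (∀ w ∈ r, c w ∈ U) → cobd θ r = 0) :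
    ∃ ψ : Finset V → F, ∀ e ∈ K, e.card = U.card - 1 →
      (∀ w ∈ e, c w ∈ U) → cobd ψ e = θ e := by
  obtain ⟨d, hd⟩ : ∃ d, U.card = d + 2 := ⟨U.card - 2, by omega⟩
  have hcy := hcyc U hU
  rw [show U.card - 2 = d by omega] at hcy
  have hf : ∀ z ∈ cyclesIn F F V (KC K c U) d, Pairf θ d z = 0 := by
    intro z hz
    obtain ⟨x, hxmem, hxz⟩ := hcy hz
    rw [← hxz, Pairf_bdry, Pairf_apply, Finsupp.sum]
    refine Finset.sum_eq_zero ?_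
    intro r hr
    have hrK : (r : Finset V) ∈ KC K c U := by
      exact (Finsupp.mem_supported F x).1 hxmem hr
    rw [hθ (r : Finset V) hrK.1 (by rw [r.2]; omega) hrK.2, mul_zero]
  obtain ⟨g, hg⟩ := cohAux (KC K c U) d θ hf
  refine ⟨g, fun e he hcard hcol => ?_⟩
  exact hg e ⟨he, hcol⟩ (by omega)

end MainDev
section Cech
variable {V : Type*} [LinearOrder V] {F : Type*} [Field F] {m : ℕ}

lemma cech {K : Set (Finset V)} {c : V → Fin (m + 1)} (hK : IsComplex K)
    (hcyc : ∀ U : Finset (Fin (m + 1)), 2 ≤ U.card →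
      cyclesIn F F V (KC K c U) (U.card - 2) ≤ boundariesIn F F V (KC K c U) (U.card - 2))
    {j : Fin (m + 1)} {u0 : V} (hu0K : ({u0} : Finset V) ∈ K) (hu0c : c u0 = j) :
    ∀ n : ℕ, ∀ R A : Finset (Fin (m + 1)), A.card ≤ n → j ∈ R → A ⊆ R.erase j →
      2 ≤ R.card → ∀ θ : Finset V → F,
      (∀ a ∈ A, ∀ r ∈ K, r.card = R.card - 1 → (∀ w ∈ r, c w ∈ R.erase a) → cobd θ r = 0) →
      ∃ χ : Finset V → F, ∀ a ∈ A, ∀ e : Finset V, e.card = R.card - 2 →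
        (∀ w ∈ e, c w ∈ R.erase a) → (e ∈ K ∨ e = ∅) → cobd χ e = θ e := by
  intro n
  induction n with
  | zero =>
    intro R A hcard hjR hA hR θ hθ
    have hAe : A = ∅ := Finset.card_eq_zero.1 (le_antisymm hcard (Nat.zero_le _))
    subst hAe
    exact ⟨fun _ => 0, fun a ha => absurd ha (Finset.notMem_empty a)⟩
  | succ n ih =>
    intro R A hcard hjR hA hR θ hθ
    rcases Finset.eq_empty_or_nonempty A with rfl | ⟨b, hb⟩
    · exact ⟨fun _ => 0, fun a ha => absurd ha (Finset.notMem_empty a)⟩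
    classical
    have hbR : b ∈ R.erase j := hA hb
    have hbj : b ≠ j := (Finset.mem_erase.1 hbR).1
    have hbR' : b ∈ R := (Finset.mem_erase.1 hbR).2
    by_cases hR2 : R.card = 2
    · have hθ0 : θ ∅ = 0 := by
        have h1 := hθ b hb {u0} hu0K (by rw [Finset.card_singleton]; omega) ?_
        · rwa [cobd_singleton] at h1
        · intro w hw
          rw [Finset.mem_singleton] at hw
          subst hw
          rw [hu0c]
          exact Finset.mem_erase.2 ⟨fun hh => hbj hh.symm, hjR⟩
      refine ⟨fun _ => 0, fun a ha e hecard hecol heK => ?_⟩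
      have he : e = ∅ := Finset.card_eq_zero.1 (by omega)
      subst he
      rw [cobd, Finset.sum_empty, hθ0]
    · have hR3 : 3 ≤ R.card := by omega
      set U := R.erase b with hUdef
      have hUcard : U.card = R.card - 1 := Finset.card_erase_of_mem hbR'
      have hU2 : 2 ≤ U.card := by omega
      obtain ⟨ψ, hψ⟩ := coh hcyc U hU2 θ
        (fun r hrK hrcard hrcol => hθ b hb r hrK (by omega) hrcol)
      set A₀ := A.erase b with hA₀def
      rcases Finset.eq_empty_or_nonempty A₀ with hA₀e | hA₀ne
      · have hAb : ∀ a ∈ A, a = b := by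
          intro x hx
          by_contra hxb
          exact (Finset.notMem_empty x) (hA₀e ▸ Finset.mem_erase.2 ⟨hxb, hx⟩)
        refine ⟨ψ, fun a ha e hecard hecol heK => ?_⟩
        have hab := hAb a ha
        subst hab
        have heK' : e ∈ K := by
          rcases heK with h | h
          · exact h
          · exfalso; rw [h, Finset.card_empty] at hecard; omega
        exact hψ e heK' (by omega) hecol
      · have hA₀card : A₀.card ≤ n := by
          have h1 : A₀.card = A.card - 1 := Finset.card_erase_of_mem hb
          have h2 : 1 ≤ A.card := Finset.card_pos.2 ⟨b, hb⟩
          omega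
        have hA₀subA : A₀ ⊆ A := Finset.erase_subset _ _
        have hA₀sub : A₀ ⊆ R.erase j := fun x hx => hA (hA₀subA hx)
        obtain ⟨χ₀, hχ₀⟩ := ih R A₀ hA₀card hjR hA₀sub hR θ
          (fun a ha => hθ a (hA₀subA ha))
        have hjU : j ∈ U := Finset.mem_erase.2 ⟨fun hh => hbj hh.symm, hjR⟩
        have hA₀U : A₀ ⊆ U.erase j := by
          intro x hx
          have hx1 := Finset.mem_erase.1 (hA₀sub hx)
          have hxb : x ≠ b := (Finset.mem_erase.1 hx).1
          exact Finset.mem_erase.2 ⟨hx1.1, Finset.mem_erase.2 ⟨hxb, hx1.2⟩⟩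
        have hη : ∀ a ∈ A₀, ∀ r ∈ K, r.card = U.card - 1 →
            (∀ w ∈ r, c w ∈ U.erase a) → cobd (fun e => ψ e - χ₀ e) r = 0 := by
          intro a ha r hrK hrcard hrcol
          have hcol1 : ∀ w ∈ r, c w ∈ U := fun w hw => Finset.mem_of_mem_erase (hrcol w hw)
          have hcol2 : ∀ w ∈ r, c w ∈ R.erase a := by
            intro w hw
            have h1 := Finset.mem_erase.1 (hrcol w hw)
            have h2 := Finset.mem_erase.1 h1.2
            exact Finset.mem_erase.2 ⟨h1.1, h2.2⟩
          rw [cobd_sub, hψ r hrK hrcard hcol1,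
            hχ₀ a ha r (by omega) hcol2 (Or.inl hrK), sub_self]
        obtain ⟨χ₁, hχ₁⟩ := ih U A₀ hA₀card hjU hA₀U hU2 (fun e => ψ e - χ₀ e) hη
        refine ⟨fun e => if (∀ w ∈ e, c w ∈ U) ∧ (e ∈ K ∨ e = ∅) then ψ e
          else χ₀ e + cobd χ₁ e, fun a ha r hrcard hrcol hrKe => ?_⟩
        have hrK' : r ∈ K := by
          rcases hrKe with h | h
          · exact h
          · exfalso; rw [h, Finset.card_empty] at hrcard; omega
        have hfacet : ∀ v ∈ r, (r.erase v ∈ K ∨ r.erase v = ∅) := by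
          intro v hv
          rcases Finset.eq_empty_or_nonempty (r.erase v) with h | h
          · exact Or.inr h
          · exact Or.inl (hK.2 r hrK' _ (Finset.erase_subset v r) h)
        by_cases hab : a = b
        · subst hab
          have hstep : cobd (fun e => if (∀ w ∈ e, c w ∈ U) ∧ (e ∈ K ∨ e = ∅) then ψ e
              else χ₀ e + cobd χ₁ e) r = cobd ψ r := by
            unfold cobd
            refine Finset.sum_congr rfl fun v hv => ?_
            congr 1
            refine if_pos ⟨fun w hw => hrcol w (Finset.mem_of_mem_erase hw), hfacet v hv⟩
          rw [hstep]
          exact hψ r hrK' (by omega) (fun w hw => hrcol w hw)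
        · have haA₀ : a ∈ A₀ := Finset.mem_erase.2 ⟨hab, ha⟩
          have hpt : ∀ v ∈ r, (if (∀ w ∈ r.erase v, c w ∈ U) ∧ (r.erase v ∈ K ∨ r.erase v = ∅)
              then ψ (r.erase v) else χ₀ (r.erase v) + cobd χ₁ (r.erase v))
              = χ₀ (r.erase v) + cobd χ₁ (r.erase v) := by
            intro v hv
            by_cases hcond : (∀ w ∈ r.erase v, c w ∈ U) ∧ (r.erase v ∈ K ∨ r.erase v = ∅)
            · rw [if_pos hcond]
              have hcols : ∀ w ∈ r.erase v, c w ∈ U.erase a := by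
                intro w hw
                have h1 := Finset.mem_erase.1 (hrcol w (Finset.mem_of_mem_erase hw))
                exact Finset.mem_erase.2 ⟨h1.1, hcond.1 w hw⟩
              have hcard1 : (r.erase v).card = U.card - 2 := by
                rw [Finset.card_erase_of_mem hv]
                omega
              have hx := hχ₁ a haA₀ (r.erase v) hcard1 hcols hcond.2
              rw [hx]
              ring
            · rw [if_neg hcond]
          have hstep : cobd (fun e => if (∀ w ∈ e, c w ∈ U) ∧ (e ∈ K ∨ e = ∅) then ψ e
              else χ₀ e + cobd χ₁ e) r = cobd (fun e => χ₀ e + cobd χ₁ e) r := by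
            unfold cobd
            refine Finset.sum_congr rfl fun v hv => ?_
            congr 1
            exact hpt v hv
          rw [hstep, cobd_add, cobd_cobd, add_zero]
          exact hχ₀ a haA₀ r hrcard hrcol (Or.inl hrK')

end Cech
section Extend
variable {V : Type*} [LinearOrder V] {F : Type*} [Field F] {m : ℕ}

lemma extend_one {K : Set (Finset V)} {c : V → Fin (m + 1)} (hK : IsComplex K)
    (hcyc : ∀ U : Finset (Fin (m + 1)), 2 ≤ U.card →
      cyclesIn F F V (KC K c U) (U.card - 2) ≤ boundariesIn F F V (KC K c U) (U.card - 2))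
    (hinj : ∀ s ∈ K, ∀ u ∈ s, ∀ w ∈ s, c u = c w → u = w)
    (hvtx : ∀ j : Fin (m + 1), ∃ u : V, ({u} : Finset V) ∈ K ∧ c u = j)
    (s : Finset V) (hs : s ∈ K) (j : Fin (m + 1)) (hj : j ∉ s.image c) :
    ∃ u : V, c u = j ∧ insert u s ∈ K := by
  classical
  obtain ⟨u0, hu0K, hu0c⟩ := hvtx j
  obtain ⟨k', hk'⟩ : ∃ k', s.card = k' + 1 :=
    ⟨s.card - 1, by have := Finset.card_pos.2 (hK.1 s hs); omega⟩
  set T := s.image c with hT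
  have hTcard : T.card = k' + 1 := by
    rw [hT, Finset.card_image_of_injOn, hk']
    intro u hu w hw
    exact hinj s hs u hu w hw
  have hjT : j ∉ T := hj
  set S := insert j T with hS
  have hScard : S.card = k' + 2 := by
    rw [hS, Finset.card_insert_of_notMem hjT, hTcard]
  have hsS : s ∈ KC K c S :=
    ⟨hs, fun w hw => Finset.mem_insert_of_mem (Finset.mem_image_of_mem c hw)⟩
  have hscell : s.card = k' + 1 := hk'
  by_cases Hz : ∀ z ∈ cyclesIn F F V (KC K c S) k', (z : Chains F V k') ⟨s, hscell⟩ = 0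
  · exfalso
    have hf : ∀ z ∈ cyclesIn F F V (KC K c S) k',
        Pairf (fun e => if e = s then (1 : F) else 0) k' z = 0 := by
      intro z hz
      rw [Pairf_indicator s hscell z]
      exact Hz z hz
    obtain ⟨g, hg⟩ := cohAux (KC K c S) k' _ hf
    have h1 : cobd g s = 1 := by rw [hg s hsS hscell, if_pos rfl]
    rcases Nat.eq_zero_or_pos k' with hk0 | hkpos
    · subst hk0
      have hu0S : ({u0} : Finset V) ∈ KC K c S := by
        refine ⟨hu0K, fun w hw => ?_⟩
        rw [Finset.mem_singleton] at hw
        subst hw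
        rw [hu0c]
        exact Finset.mem_insert_self j T
      have hne : ({u0} : Finset V) ≠ s := by
        intro hh
        apply hjT
        rw [hT, ← hh, Finset.image_singleton, hu0c]
        exact Finset.mem_singleton_self j
      have h2 : cobd g {u0} = 0 := by
        rw [hg {u0} hu0S (Finset.card_singleton u0), if_neg hne]
      obtain ⟨v, hv⟩ := Finset.card_eq_one.1 hscell
      rw [hv, cobd_singleton] at h1
      rw [cobd_singleton] at h2
      rw [h2] at h1
      exact zero_ne_one h1
    · have hjS : j ∈ S := Finset.mem_insert_self j T
      have hTsub : T ⊆ S.erase j := by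
        intro a ha
        exact Finset.mem_erase.2 ⟨fun hh => hjT (hh ▸ ha), Finset.mem_insert_of_mem ha⟩
      have hθ : ∀ a ∈ T, ∀ r ∈ K, r.card = S.card - 1 →
          (∀ w ∈ r, c w ∈ S.erase a) → cobd g r = 0 := by
        intro a ha r hrK hrcard hrcol
        have hrS : r ∈ KC K c S := ⟨hrK, fun w hw => Finset.mem_of_mem_erase (hrcol w hw)⟩
        rw [hg r hrS (by omega)]
        have hne : r ≠ s := by
          intro hh
          subst hh
          obtain ⟨w, hw, hcw⟩ := Finset.mem_image.1 ha
          exact (Finset.mem_erase.1 (hrcol w hw)).1 hcw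
        rw [if_neg hne]
      obtain ⟨χ, hχ⟩ := cech hK hcyc hu0K hu0c T.card S T le_rfl hjS hTsub (by omega) g hθ
      have h2 : cobd g s = 0 := by
        have hpt : ∀ v ∈ s, g (s.erase v) = cobd χ (s.erase v) := by
          intro v hv
          have hcards : (s.erase v).card = S.card - 2 := by
            rw [Finset.card_erase_of_mem hv]
            omega
          have hcols : ∀ w ∈ s.erase v, c w ∈ S.erase (c v) := by
            intro w hw
            have hws : w ∈ s := Finset.mem_of_mem_erase hw
            refine Finset.mem_erase.2 ⟨?_, Finset.mem_insert_of_mem (Finset.mem_image_of_mem c hws)⟩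
            intro hcc
            exact (Finset.mem_erase.1 hw).1 (hinj s hs w hws v hv hcc)
          have hKe : s.erase v ∈ K ∨ s.erase v = ∅ := by
            refine Or.inl (hK.2 s hs _ (Finset.erase_subset v s) ?_)
            rw [← Finset.card_pos, Finset.card_erase_of_mem hv]
            omega
          exact (hχ (c v) (Finset.mem_image_of_mem c hv) (s.erase v) hcards hcols hKe).symm
        have heq2 : cobd g s = cobd (cobd χ) s := by
          unfold cobd
          refine Finset.sum_congr rfl fun v hv => ?_
          rw [hpt v hv]
          rfl
        rw [heq2, cobd_cobd]
      rw [h1] at h2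
      exact one_ne_zero h2
  · push_neg at Hz
    obtain ⟨z, hzc, hzne⟩ := Hz
    have hb := hcyc S (by omega)
    rw [show S.card - 2 = k' by omega] at hb
    obtain ⟨x, hxmem, hxz⟩ := hb hzc
    obtain ⟨r, hr, v, hvr, herase⟩ := bdry_eval_ne_zero x ⟨s, hscell⟩ (by
      rw [show bdry F F V k' x = z from hxz]; exact hzne)
    have herase' : ((r : {t : Finset V // t.card = k' + 1 + 1}) : Finset V).erase v = s := herase
    have hrS : (r : Finset V) ∈ KC K c S := (Finsupp.mem_supported F x).1 hxmem hr
    have hvs : v ∉ s := by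
      intro hvs
      exact Finset.notMem_erase v (r : Finset V) (by rw [herase']; exact hvs)
    have hins : insert v s = ((r : {t : Finset V // t.card = k' + 1 + 1}) : Finset V) := by
      rw [← herase', Finset.insert_erase hvr]
    refine ⟨v, ?_, by rw [hins]; exact hrS.1⟩
    have hcv : c v ∈ S := hrS.2 v hvr
    rcases Finset.mem_insert.1 hcv with h | h
    · exact h
    · exfalso
      obtain ⟨w, hws, hcw⟩ := Finset.mem_image.1 h
      have hwr : w ∈ ((r : {t : Finset V // t.card = k' + 1 + 1}) : Finset V) := by
        rw [← hins]
        exact Finset.mem_insert_of_mem hws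
      have heq := hinj (r : Finset V) hrS.1 v hvr w hwr hcw.symm
      exact hvs (heq ▸ hws)

end Extend

/-- If every colour class is `0`-dimensional and `H̃_{|S|-2}(K_S) = 0` for every
nonempty `S`, then every simplex of `K` is contained in a rainbow simplex. -/
theorem every_simplex_in_rainbow {V : Type*} [LinearOrder V] (F : Type*) [Field F]
    (m : ℕ) (K : Set (Finset V)) (hK : IsComplex K) (hvert : ∀ v : V, {v} ∈ K)
    (c : V → Fin (m + 1))
    (h0 : ∀ u w : V, u ≠ w → c u = c w → ({u, w} : Finset V) ∉ K)
    (h : ∀ S : Finset (Fin (m + 1)), S.Nonempty →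
      RedHVanish F F V {s ∈ K | ∀ w ∈ s, c w ∈ S} ((S.card : ℤ) - 2)) :
    ∀ s ∈ K, ∃ t ∈ K, s ⊆ t ∧ ∀ i : Fin (m + 1), ∃! u, u ∈ t ∧ c u = i := by
  classical
  have hinj : ∀ s ∈ K, ∀ u ∈ s, ∀ w ∈ s, c u = c w → u = w := by
    intro s hsK u hu w hw hc
    by_contra hne
    refine h0 u w hne hc (hK.2 s hsK {u, w} ?_ ⟨u, Finset.mem_insert_self u {w}⟩)
    intro x hx
    rcases Finset.mem_insert.1 hx with rfl | hx
    · exact hu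
    · rw [Finset.mem_singleton] at hx; subst hx; exact hw
  have hvtx : ∀ j : Fin (m + 1), ∃ u : V, ({u} : Finset V) ∈ K ∧ c u = j := by
    intro j
    have hj := h {j} ⟨j, Finset.mem_singleton_self j⟩
    rw [RedHVanish, Finset.card_singleton] at hj
    rw [if_neg (by norm_num), if_pos (by norm_num)] at hj
    obtain ⟨s₀, hs₀⟩ := hj
    obtain ⟨u, hu⟩ := hK.1 s₀ hs₀.1
    refine ⟨u, hK.2 s₀ hs₀.1 {u} (Finset.singleton_subset_iff.2 hu)
      ⟨u, Finset.mem_singleton_self u⟩, ?_⟩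
    exact Finset.mem_singleton.1 (hs₀.2 u hu)
  have hcyc : ∀ U : Finset (Fin (m + 1)), 2 ≤ U.card →
      cyclesIn F F V (KC K c U) (U.card - 2) ≤ boundariesIn F F V (KC K c U) (U.card - 2) := by
    intro U hU z hz
    have hUne : U.Nonempty := Finset.card_pos.1 (by omega)
    have hh := h U hUne
    rw [RedHVanish, if_neg (by push_cast; omega), if_neg (by push_cast; omega)] at hh
    rw [show ((U.card : ℤ) - 2).toNat = U.card - 2 by omega] at hh
    have helim := @Subsingleton.elim _ hh
      (Submodule.Quotient.mk (⟨z, hz⟩ : cyclesIn F F V (KC K c U) (U.card - 2))) 0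
    exact (Submodule.Quotient.mk_eq_zero (Submodule.comap (cyclesIn F F V (KC K c U) (U.card - 2)).subtype
      (boundariesIn F F V (KC K c U) (U.card - 2)))).1 helim
  suffices H : ∀ d : ℕ, ∀ s ∈ K, m + 1 - (s.image c).card ≤ d →
      ∃ t ∈ K, s ⊆ t ∧ ∀ i : Fin (m + 1), ∃! u, u ∈ t ∧ c u = i by
    intro s hs
    exact H (m + 1) s hs (by omega)
  intro d
  induction d with
  | zero =>
    intro s hs hd
    have hle : (s.image c).card ≤ m + 1 := by
      have h1 := Finset.card_le_univ (s.image c)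
      rwa [Fintype.card_fin] at h1
    have himg : s.image c = Finset.univ := by
      apply Finset.eq_univ_of_card
      rw [Fintype.card_fin]
      omega
    refine ⟨s, hs, subset_rfl, fun i => ?_⟩
    have hi : i ∈ s.image c := himg ▸ Finset.mem_univ i
    obtain ⟨u, hu, hcu⟩ := Finset.mem_image.1 hi
    refine ⟨u, ⟨hu, hcu⟩, ?_⟩
    rintro w ⟨hw, hcw⟩
    exact hinj s hs w hw u hu (hcw.trans hcu.symm)
  | succ d ih =>
    intro s hs hd
    by_cases hfull : m + 1 - (s.image c).card ≤ d
    · exact ih s hs hfull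
    · have hne : s.image c ≠ Finset.univ := by
        intro hh
        rw [hh, Finset.card_univ, Fintype.card_fin] at hfull
        omega
      obtain ⟨j, hj⟩ : ∃ j, j ∉ s.image c := by
        by_contra hcon
        push_neg at hcon
        exact hne (Finset.eq_univ_iff_forall.2 hcon)
      obtain ⟨u, hcu, hins⟩ := extend_one (F := F) hK hcyc hinj hvtx s hs j hj
      have hcard : ((insert u s).image c).card = (s.image c).card + 1 := by
        rw [Finset.image_insert, hcu, Finset.card_insert_of_notMem hj]
      obtain ⟨t, ht, hsub, hrb⟩ := ih (insert u s) hins (by omega)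
      exact ⟨t, ht, fun x hx => hsub (Finset.mem_insert_of_mem hx), hrb⟩
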